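/- (Polynomial Dehn–Sommerville relation for simplicial complexes, h-version.) Let Δ be a simplicial complex of dimension d−1 with h-numbers h_0, …, h_d. Then the polynomial identity ∑_{i=0}^d (h_i − h_{d−i}) (x+1)^i x^{d−i} = ∑_{F ∈ Δ} (m_F − 1) x^{|F|} holds in ℤ[x]. -/

import Mathlib

open Polynomial Finset

/-- A (finite, abstract) simplicial complex: a finite collection of finite subsets of `V`
containing the empty set and closed under taking subsets. -/
def IsSimplicialComplex {V : Type*} [DecidableEq V] (Δ : Finset (Finset V)) : Prop :=
  ∅ ∈ Δ ∧ ∀ F ∈ Δ, ∀ G ⊆ F, G ∈ Δ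

/-- `Δ` has dimension `d - 1`: every face has at most `d` elements and some face has
exactly `d` elements. -/
def HasDimension {V : Type*} [DecidableEq V] (Δ : Finset (Finset V)) (d : ℕ) : Prop :=
  (∀ F ∈ Δ, F.card ≤ d) ∧ ∃ F ∈ Δ, F.card = d

/-- `fnum Δ i` is the number of faces of `Δ` with exactly `i` elements, i.e. `f_{i-1}`. -/
def fnum {V : Type*} [DecidableEq V] (Δ : Finset (Finset V)) (i : ℕ) : ℕ :=
  (Δ.filter fun F => F.card = i).card

/-- The multiplicity `m_F = ∑_{G ∈ Δ, F ⊆ G} (−1)^{d−|G|}` of a face `F` of a complex of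
dimension `d − 1` (all faces `G` satisfy `|G| ≤ d`, so `d - G.card` is the usual subtraction). -/
def mult {V : Type*} [DecidableEq V] (Δ : Finset (Finset V)) (d : ℕ) (F : Finset V) : ℤ :=
  ∑ G ∈ Δ.filter (fun G => F ⊆ G), (-1 : ℤ) ^ (d - G.card)

/-- The reduced Euler characteristic `χ̃(Γ) = ∑_{G ∈ Γ} (−1)^{|G|−1}`; the exponent is
written `|G| + 1`, which has the same parity as `|G| − 1` (the empty face contributes `−1`). -/
def chiTilde {V : Type*} [DecidableEq V] (Γ : Finset (Finset V)) : ℤ :=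
  ∑ G ∈ Γ, (-1 : ℤ) ^ (G.card + 1)

/-- The link of a face `F` in `Δ`. -/
def link {V : Type*} [DecidableEq V] (Δ : Finset (Finset V)) (F : Finset V) :
    Finset (Finset V) :=
  Δ.filter fun G => G ∩ F = ∅ ∧ G ∪ F ∈ Δ

/-- `Δ` (of dimension `d − 1`) is reciprocal if `m_F ∈ {0, 1}` for every nonempty face. -/
def IsReciprocal {V : Type*} [DecidableEq V] (Δ : Finset (Finset V)) (d : ℕ) : Prop :=
  ∀ F ∈ Δ, F ≠ ∅ → mult Δ d F = 0 ∨ mult Δ d F = 1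

/-- `Δ` (of dimension `d − 1`) is semi-Eulerian if `m_F = 1` for every nonempty face. -/
def IsSemiEulerian {V : Type*} [DecidableEq V] (Δ : Finset (Finset V)) (d : ℕ) : Prop :=
  ∀ F ∈ Δ, F ≠ ∅ → mult Δ d F = 1

/-- `fint Δ d i` is the number of interior faces (nonempty faces with `m_F = 1`) of `Δ`
with exactly `i` elements, i.e. `f^int_{i-1}`. -/
def fint {V : Type*} [DecidableEq V] (Δ : Finset (Finset V)) (d : ℕ) (i : ℕ) : ℕ :=
  (Δ.filter fun F => F.card = i ∧ F ≠ ∅ ∧ mult Δ d F = 1).card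


lemma reflect_finset_sum {ι : Type*} (s : Finset ι) (g : ι → Polynomial ℤ) (N : ℕ) :
    reflect N (∑ i ∈ s, g i) = ∑ i ∈ s, reflect N (g i) := by
  classical
  induction s using Finset.induction with
  | empty => simp [reflect_zero]
  | insert a t h ih => simp [Finset.sum_insert h, reflect_add, ih]

lemma reflect_X_add_one_pow (n : ℕ) :
    reflect n ((X + 1 : Polynomial ℤ) ^ n) = (X + 1) ^ n := by
  induction n with
  | zero => simp
  | succ n ih =>
    have hdeg : ((X + 1 : Polynomial ℤ) ^ n).natDegree ≤ n := by
      have h1 : (X + 1 : Polynomial ℤ).natDegree ≤ 1 := by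
        simpa using (natDegree_X_add_C (1:ℤ)).le
      simpa using natDegree_pow_le_of_le n h1
    have hdeg1 : ((X + 1 : Polynomial ℤ)).natDegree ≤ 1 := by
      simpa using (natDegree_X_add_C (1:ℤ)).le
    rw [pow_succ, reflect_mul _ _ hdeg hdeg1, ih]
    congr 1
    rw [reflect_add]
    simp [reflect_monomial, revAt_le]
    ring

lemma reflect_one_sub_X_pow (n : ℕ) :
    reflect n ((1 - X : Polynomial ℤ) ^ n) = (X - 1) ^ n := by
  induction n with
  | zero => simp
  | succ n ih =>
    have hdeg : ((1 - X : Polynomial ℤ) ^ n).natDegree ≤ n := by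
      have : (1 - X : Polynomial ℤ).natDegree ≤ 1 := by
        simpa using natDegree_sub_le (1 : Polynomial ℤ) X
      simpa using natDegree_pow_le_of_le n this
    have hdeg1 : ((1 - X : Polynomial ℤ)).natDegree ≤ 1 := by
      simpa using natDegree_sub_le (1 : Polynomial ℤ) X
    rw [pow_succ, reflect_mul _ _ hdeg hdeg1, ih, pow_succ]
    congr 1
    have : (1 - X : Polynomial ℤ) = (-1) * X + 1 := by ring
    rw [this, reflect_add]
    have : (-1 * X : Polynomial ℤ) = C (-1) * X ^ 1 := by simp
    rw [this, reflect_C_mul_X_pow]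
    simp [revAt_le]
    ring

lemma reflect_one' (N : ℕ) : reflect N (1 : Polynomial ℤ) = X ^ N := by
  simpa using reflect_C (1 : ℤ) N


lemma reflect_aux_mul (i j : ℕ) (p q : Polynomial ℤ) (hp : p.natDegree ≤ i)
    (hq : q.natDegree ≤ j) :
    reflect (i + j) (p * q) = reflect i p * reflect j q := reflect_mul _ _ hp hq

lemma natDeg_X_add_one_pow (i : ℕ) : ((X + 1 : Polynomial ℤ) ^ i).natDegree ≤ i := by
  have h1 : (X + 1 : Polynomial ℤ).natDegree ≤ 1 := by
    simpa using (natDegree_X_add_C (1:ℤ)).le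
  simpa using natDegree_pow_le_of_le i h1

lemma natDeg_one_sub_X_pow (i : ℕ) : ((1 - X : Polynomial ℤ) ^ i).natDegree ≤ i := by
  have h1 : (1 - X : Polynomial ℤ).natDegree ≤ 1 := by
    simpa using natDegree_sub_le (1 : Polynomial ℤ) X
  simpa using natDegree_pow_le_of_le i h1

lemma key_T_lhs (d : ℕ) (a : ℤ) {i : ℕ} (hi : i ≤ d) :
    reflect d ((C a * X ^ i : Polynomial ℤ).comp (X + 1)) = C a * (X + 1) ^ i * X ^ (d - i) := by
  obtain ⟨j, rfl⟩ : ∃ j, d = i + j := ⟨d - i, by omega⟩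
  simp only [Nat.add_sub_cancel_left]
  rw [mul_comp, C_comp, X_pow_comp, reflect_C_mul]
  have e : ((X + 1 : Polynomial ℤ) ^ i) = (X + 1) ^ i * 1 := by ring
  rw [e, reflect_aux_mul i j _ _ (by simpa using natDeg_X_add_one_pow i)
      (by simp), reflect_X_add_one_pow, reflect_one', mul_assoc]
  ring

lemma key_T_rhs (d : ℕ) (a : ℤ) {i : ℕ} (hi : i ≤ d) :
    reflect d ((C a * X ^ i * (1 - X) ^ (d - i) : Polynomial ℤ).comp (X + 1))
      = C (a * (-1) ^ (d - i)) * (X + 1) ^ i := by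
  obtain ⟨j, rfl⟩ : ∃ j, d = i + j := ⟨d - i, by omega⟩
  simp only [Nat.add_sub_cancel_left]
  have hcomp : ((C a * X ^ i * (1 - X) ^ j : Polynomial ℤ).comp (X + 1))
      = C (a * (-1) ^ j) * ((X + 1) ^ i * X ^ j) := by
    rw [mul_comp, mul_comp, C_comp, X_pow_comp, pow_comp, sub_comp, one_comp, X_comp]
    have e : (1 - (X + 1) : Polynomial ℤ) = C (-1) * X := by simp
    rw [e, mul_pow, ← C_pow, C_mul]
    ring
  rw [hcomp, reflect_C_mul,
    reflect_aux_mul i j _ _ (natDeg_X_add_one_pow i) (by simpa using (natDegree_X_pow (R := ℤ) j).le),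
    reflect_X_add_one_pow, reflect_monomial, revAt_le (le_refl _)]
  simp

lemma key_S_lhs (d : ℕ) (a : ℤ) {i : ℕ} (hi : i ≤ d) :
    reflect d ((reflect d (C a * X ^ i : Polynomial ℤ)).comp (X + 1))
      = C a * X ^ i * (X + 1) ^ (d - i) := by
  obtain ⟨j, rfl⟩ : ∃ j, d = i + j := ⟨d - i, by omega⟩
  simp only [Nat.add_sub_cancel_left]
  rw [reflect_C_mul_X_pow, revAt_le hi, mul_comp, C_comp, X_pow_comp, reflect_C_mul]
  simp only [Nat.add_sub_cancel_left]
  have e : ((X + 1 : Polynomial ℤ) ^ j) = (X + 1) ^ j * 1 := by ring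
  have hd : i + j = j + i := by omega
  rw [e, hd, reflect_aux_mul j i _ _ (natDeg_X_add_one_pow j) (by simp),
    reflect_X_add_one_pow, reflect_one']
  ring

lemma key_S_rhs (d : ℕ) (a : ℤ) {i : ℕ} (hi : i ≤ d) :
    reflect d ((reflect d (C a * X ^ i * (1 - X) ^ (d - i) : Polynomial ℤ)).comp (X + 1))
      = C a * X ^ i := by
  obtain ⟨j, rfl⟩ : ∃ j, d = i + j := ⟨d - i, by omega⟩
  simp only [Nat.add_sub_cancel_left]
  have h1 : reflect (i + j) (C a * X ^ i * (1 - X) ^ j : Polynomial ℤ)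
      = C a * (X - 1) ^ j := by
    rw [mul_assoc, reflect_C_mul,
      reflect_aux_mul i j _ _ (by simpa using (natDegree_X_pow (R := ℤ) i).le)
        (natDeg_one_sub_X_pow j),
      reflect_monomial, revAt_le (le_refl _), reflect_one_sub_X_pow]
    simp
  rw [h1, mul_comp, C_comp, pow_comp, sub_comp, X_comp, one_comp]
  have e : ((X + 1 - 1 : Polynomial ℤ)) = X := by ring
  rw [e, reflect_C_mul, reflect_monomial, revAt_le (by omega : j ≤ i + j)]
  congr 2
  omega

lemma sum_fnum_eq {V : Type*} [DecidableEq V] (Δ : Finset (Finset V)) (d : ℕ)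
    (hcard : ∀ F ∈ Δ, F.card ≤ d) (g : ℕ → Polynomial ℤ) :
    ∑ i ∈ range (d + 1), C ((fnum Δ i : ℤ)) * g i = ∑ F ∈ Δ, g F.card := by
  rw [← Finset.sum_fiberwise_of_maps_to'
    (fun F hF => mem_range.2 (Nat.lt_succ_of_le (hcard F hF))) g]
  refine Finset.sum_congr rfl fun i _ => ?_
  rw [Finset.sum_const, fnum, nsmul_eq_mul]
  simp

lemma X_add_one_pow_card {V : Type*} [DecidableEq V] (F : Finset V) :
    ((X + 1 : Polynomial ℤ)) ^ F.card = ∑ E ∈ F.powerset, X ^ E.card := by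
  induction F using Finset.induction with
  | empty => simp
  | @insert a F ha ih =>
    rw [Finset.sum_powerset_insert ha, Finset.card_insert_of_notMem ha, pow_succ, ih]
    have e : ∀ E ∈ F.powerset, (X : Polynomial ℤ) ^ (insert a E).card = X * X ^ E.card := by
      intro E hE
      have : a ∉ E := fun hc => ha (Finset.mem_powerset.1 hE hc)
      rw [Finset.card_insert_of_notMem this, pow_succ]
      ring
    rw [Finset.sum_congr rfl e, ← Finset.mul_sum]
    ring

/-- Polynomial Dehn–Sommerville relation for simplicial complexes, h-version:
`∑ (h_i − h_{d−i}) (x+1)^i x^{d−i} = ∑_{F ∈ Δ} (m_F − 1) x^{|F|}`. -/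
theorem polynomial_DS_h_version {V : Type*} [DecidableEq V] (Δ : Finset (Finset V)) (d : ℕ)
    (hd : 1 ≤ d) (hΔ : IsSimplicialComplex Δ) (hdim : HasDimension Δ d)
    (h : ℕ → ℤ)
    (hh : (∑ i ∈ range (d + 1), C (h i) * X ^ i : Polynomial ℤ)
        = ∑ i ∈ range (d + 1), C ((fnum Δ i : ℤ)) * X ^ i * (1 - X) ^ (d - i)) :
    (∑ i ∈ range (d + 1), C (h i - h (d - i)) * (X + 1) ^ i * X ^ (d - i) : Polynomial ℤ)
      = ∑ F ∈ Δ, C (mult Δ d F - 1) * X ^ F.card := by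
  obtain ⟨hcard, -⟩ := hdim
  obtain ⟨-, hclosed⟩ := hΔ
  have key1 : (∑ i ∈ range (d + 1), C (h i) * (X + 1) ^ i * X ^ (d - i) : Polynomial ℤ)
      = ∑ i ∈ range (d + 1), C ((fnum Δ i : ℤ) * (-1) ^ (d - i)) * (X + 1) ^ i := by
    have hc := congrArg (fun p : Polynomial ℤ => reflect d (p.comp (X + 1))) hh
    simp only [Polynomial.sum_comp, reflect_finset_sum] at hc
    calc ∑ i ∈ range (d + 1), C (h i) * (X + 1) ^ i * X ^ (d - i)
        = ∑ i ∈ range (d + 1), reflect d ((C (h i) * X ^ i).comp (X + 1)) :=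
          Finset.sum_congr rfl fun i hi =>
            (key_T_lhs d _ (Nat.lt_succ_iff.1 (mem_range.1 hi))).symm
      _ = ∑ i ∈ range (d + 1),
            reflect d ((C ((fnum Δ i : ℤ)) * X ^ i * (1 - X) ^ (d - i)).comp (X + 1)) := hc
      _ = _ := Finset.sum_congr rfl fun i hi =>
            key_T_rhs d _ (Nat.lt_succ_iff.1 (mem_range.1 hi))
  have key2 : (∑ i ∈ range (d + 1), C (h (d - i)) * (X + 1) ^ i * X ^ (d - i) : Polynomial ℤ)
      = ∑ i ∈ range (d + 1), C ((fnum Δ i : ℤ)) * X ^ i := by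
    have hc := congrArg (fun p : Polynomial ℤ => reflect d ((reflect d p).comp (X + 1))) hh
    simp only [reflect_finset_sum, Polynomial.sum_comp] at hc
    have L : (∑ i ∈ range (d + 1), C (h i) * X ^ i * (X + 1) ^ (d - i) : Polynomial ℤ)
        = ∑ i ∈ range (d + 1), C ((fnum Δ i : ℤ)) * X ^ i := by
      calc ∑ i ∈ range (d + 1), C (h i) * X ^ i * (X + 1) ^ (d - i)
          = ∑ i ∈ range (d + 1), reflect d ((reflect d (C (h i) * X ^ i)).comp (X + 1)) :=
            Finset.sum_congr rfl fun i hi =>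
              (key_S_lhs d _ (Nat.lt_succ_iff.1 (mem_range.1 hi))).symm
        _ = ∑ i ∈ range (d + 1), reflect d
              ((reflect d (C ((fnum Δ i : ℤ)) * X ^ i * (1 - X) ^ (d - i))).comp (X + 1)) := hc
        _ = _ := Finset.sum_congr rfl fun i hi =>
              key_S_rhs d _ (Nat.lt_succ_iff.1 (mem_range.1 hi))
    rw [← L, ← Finset.sum_range_reflect (fun j => C (h j) * X ^ j * (X + 1) ^ (d - j)) (d + 1)]
    refine Finset.sum_congr rfl fun i hi => ?_
    have hi' : i ≤ d := Nat.lt_succ_iff.1 (mem_range.1 hi)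
    have e1 : d + 1 - 1 - i = d - i := by omega
    have e2 : d - (d - i) = i := by omega
    rw [e1, e2]
    ring
  have keyB : (∑ i ∈ range (d + 1), C ((fnum Δ i : ℤ)) * X ^ i : Polynomial ℤ)
      = ∑ F ∈ Δ, (X : Polynomial ℤ) ^ F.card := sum_fnum_eq Δ d hcard _
  have keyA : (∑ i ∈ range (d + 1), C ((fnum Δ i : ℤ) * (-1) ^ (d - i)) * (X + 1) ^ i
        : Polynomial ℤ) = ∑ F ∈ Δ, C (mult Δ d F) * X ^ F.card := by
    have step1 : (∑ i ∈ range (d + 1), C ((fnum Δ i : ℤ) * (-1) ^ (d - i)) * (X + 1) ^ i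
          : Polynomial ℤ) = ∑ F ∈ Δ, C ((-1 : ℤ) ^ (d - F.card)) * (X + 1) ^ F.card := by
      rw [← sum_fnum_eq Δ d hcard (fun i => C ((-1 : ℤ) ^ (d - i)) * (X + 1) ^ i)]
      exact Finset.sum_congr rfl fun i _ => by rw [C_mul]; ring
    rw [step1]
    calc ∑ F ∈ Δ, C ((-1 : ℤ) ^ (d - F.card)) * (X + 1) ^ F.card
        = ∑ F ∈ Δ, ∑ E ∈ Δ.filter (fun E => E ⊆ F),
            C ((-1 : ℤ) ^ (d - F.card)) * X ^ E.card := by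
          refine Finset.sum_congr rfl fun F hF => ?_
          rw [X_add_one_pow_card, Finset.mul_sum]
          have hset : Δ.filter (fun E => E ⊆ F) = F.powerset := by
            ext E
            simp only [Finset.mem_filter, Finset.mem_powerset]
            exact ⟨fun hE => hE.2, fun hE => ⟨hclosed F hF E hE, hE⟩⟩
          rw [hset]
      _ = ∑ E ∈ Δ, ∑ F ∈ Δ.filter (fun F => E ⊆ F),
            C ((-1 : ℤ) ^ (d - F.card)) * X ^ E.card := by
          simp only [Finset.sum_filter]
          exact Finset.sum_comm
      _ = ∑ E ∈ Δ, C (mult Δ d E) * X ^ E.card := by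
          refine Finset.sum_congr rfl fun E _ => ?_
          rw [mult, map_sum, Finset.sum_mul]
  calc (∑ i ∈ range (d + 1), C (h i - h (d - i)) * (X + 1) ^ i * X ^ (d - i) : Polynomial ℤ)
      = (∑ i ∈ range (d + 1), C (h i) * (X + 1) ^ i * X ^ (d - i))
        - ∑ i ∈ range (d + 1), C (h (d - i)) * (X + 1) ^ i * X ^ (d - i) := by
        rw [← Finset.sum_sub_distrib]
        exact Finset.sum_congr rfl fun i _ => by rw [C_sub]; ring
    _ = (∑ F ∈ Δ, C (mult Δ d F) * X ^ F.card) - ∑ F ∈ Δ, (X : Polynomial ℤ) ^ F.card := by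
        rw [key1, keyA, key2, keyB]
    _ = _ := by
        rw [← Finset.sum_sub_distrib]
        exact Finset.sum_congr rfl fun F _ => by rw [C_sub, sub_mul, C_1, one_mul]
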